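/- Let F1 and F2 be projections (real-valued functions) on a finite dataset D, with Pearson correlation coefficient ρ over D satisfying |ρ| ≥ 1/2. Then there exist β1, β2 ∈ ℝ with β1² + β2² = 1 such that the projection F = β1·F1 + β2·F2 satisfies σ(F(D)) < σ(F1(D)) and σ(F(D)) < σ(F2(D)), where σ denotes standard deviation over D. -/

import Mathlib

open Finset BigOperators

noncomputable def dmean {n : ℕ} (v : Fin n → ℝ) : ℝ := (∑ i, v i) / n

noncomputable def dvar {n : ℕ} (v : Fin n → ℝ) : ℝ := (∑ i, (v i - dmean v) ^ 2) / n

noncomputable def dstd {n : ℕ} (v : Fin n → ℝ) : ℝ := Real.sqrt (dvar v)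

noncomputable def dcorr {n : ℕ} (x y : Fin n → ℝ) : ℝ :=
  ((∑ i, (x i - dmean x) * (y i - dmean y)) / n) / (dstd x * dstd y)

lemma dmean_comb {n : ℕ} (a b : ℝ) (x y : Fin n → ℝ) :
    dmean (fun i => a * x i + b * y i) = a * dmean x + b * dmean y := by
  simp [dmean, Finset.sum_add_distrib, ← Finset.mul_sum, add_div, mul_div_assoc]

lemma dvar_comb {n : ℕ} (a b : ℝ) (x y : Fin n → ℝ) :
    dvar (fun i => a * x i + b * y i) =
      a ^ 2 * dvar x + b ^ 2 * dvar y +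
        2 * a * b * ((∑ i, (x i - dmean x) * (y i - dmean y)) / n) := by
  simp only [dvar, dmean_comb]
  have h : ∀ i : Fin n, (a * x i + b * y i - (a * dmean x + b * dmean y)) ^ 2 =
      a ^ 2 * (x i - dmean x) ^ 2 + b ^ 2 * (y i - dmean y) ^ 2 +
        2 * a * b * ((x i - dmean x) * (y i - dmean y)) := by
    intro i; ring
  rw [Finset.sum_congr rfl (fun i _ => h i), Finset.sum_add_distrib,
    Finset.sum_add_distrib, ← Finset.mul_sum, ← Finset.mul_sum, ← Finset.mul_sum]
  ring

lemma dvar_nonneg {n : ℕ} (v : Fin n → ℝ) : 0 ≤ dvar v := by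
  unfold dvar; positivity

set_option maxHeartbeats 1000000 in
theorem stmt0 {α : Type*} {n : ℕ} (hn : 0 < n) (D : Fin n → α) (F1 F2 : α → ℝ)
    (h1 : dstd (fun i => F1 (D i)) ≠ 0) (h2 : dstd (fun i => F2 (D i)) ≠ 0)
    (hρ : 1 / 2 ≤ |dcorr (fun i => F1 (D i)) (fun i => F2 (D i))|) :
    ∃ β1 β2 : ℝ, β1 ^ 2 + β2 ^ 2 = 1 ∧
      dstd (fun i => β1 * F1 (D i) + β2 * F2 (D i)) < dstd (fun i => F1 (D i)) ∧
      dstd (fun i => β1 * F1 (D i) + β2 * F2 (D i)) < dstd (fun i => F2 (D i)) := by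
  set x : Fin n → ℝ := fun i => F1 (D i) with hx
  set y : Fin n → ℝ := fun i => F2 (D i) with hy
  set s1 : ℝ := dstd x with hs1def
  set s2 : ℝ := dstd y with hs2def
  have hs1nn : 0 ≤ s1 := Real.sqrt_nonneg _
  have hs2nn : 0 ≤ s2 := Real.sqrt_nonneg _
  have hs1 : 0 < s1 := lt_of_le_of_ne hs1nn (Ne.symm h1)
  have hs2 : 0 < s2 := lt_of_le_of_ne hs2nn (Ne.symm h2)
  have hv1 : dvar x = s1 ^ 2 := (Real.sq_sqrt (dvar_nonneg x)).symm
  have hv2 : dvar y = s2 ^ 2 := (Real.sq_sqrt (dvar_nonneg y)).symm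
  set cov : ℝ := (∑ i, (x i - dmean x) * (y i - dmean y)) / n with hcovdef
  set ρ : ℝ := dcorr x y with hρdef
  have hcov : cov = ρ * (s1 * s2) := by
    rw [hρdef, dcorr, ← hs1def, ← hs2def, ← hcovdef,
      div_mul_cancel₀ cov (mul_ne_zero h1 h2)]
  set r : ℝ := Real.sqrt (s1 ^ 2 + s2 ^ 2) with hrdef
  have hr : 0 < r := Real.sqrt_pos.mpr (by positivity)
  have hr2 : r ^ 2 = s1 ^ 2 + s2 ^ 2 := Real.sq_sqrt (by positivity)
  have hrne : r ≠ 0 := hr.ne'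
  have hsum : (s2 / r) ^ 2 + (s1 / r) ^ 2 = 1 := by
    field_simp
    rw [hr2]; ring
  have key : ∀ b2 : ℝ, dvar (fun i => (s2 / r) * x i + b2 * y i) < s1 ^ 2 →
      dvar (fun i => (s2 / r) * x i + b2 * y i) < s2 ^ 2 →
      dstd (fun i => (s2 / r) * x i + b2 * y i) < s1 ∧
      dstd (fun i => (s2 / r) * x i + b2 * y i) < s2 := by
    intro b2 hlt1 hlt2
    constructor
    · exact Real.sqrt_lt_sqrt (dvar_nonneg _) (hv1 ▸ hlt1)
    · exact Real.sqrt_lt_sqrt (dvar_nonneg _) (hv2 ▸ hlt2)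
  rcases le_or_gt 0 ρ with hpos | hneg
  · -- ρ ≥ 1/2, take β2 = -(s1/r)
    have hρ2 : 1 / 2 ≤ ρ := by rwa [abs_of_nonneg hpos] at hρ
    have hcovge : s1 * s2 / 2 ≤ cov := by
      rw [hcov]; nlinarith [mul_pos hs1 hs2]
    have hvar : dvar (fun i => (s2 / r) * x i + (-(s1 / r)) * y i) * r ^ 2 =
        2 * s1 ^ 2 * s2 ^ 2 - 2 * s1 * s2 * cov := by
      rw [dvar_comb, hv1, hv2, ← hcovdef]
      field_simp
      ring
    have h3 : s1 * s2 * (s1 * s2 / 2) ≤ s1 * s2 * cov :=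
      mul_le_mul_of_nonneg_left hcovge (mul_pos hs1 hs2).le
    have hlt1 : dvar (fun i => (s2 / r) * x i + (-(s1 / r)) * y i) < s1 ^ 2 := by
      rw [← mul_lt_mul_iff_left₀ (by positivity : (0:ℝ) < r ^ 2), hvar, hr2]
      nlinarith [h3, pow_pos hs1 4, pow_pos hs2 4]
    have hlt2 : dvar (fun i => (s2 / r) * x i + (-(s1 / r)) * y i) < s2 ^ 2 := by
      rw [← mul_lt_mul_iff_left₀ (by positivity : (0:ℝ) < r ^ 2), hvar, hr2]
      nlinarith [h3, pow_pos hs1 4, pow_pos hs2 4]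
    obtain ⟨hA, hB⟩ := key (-(s1 / r)) hlt1 hlt2
    exact ⟨s2 / r, -(s1 / r), by rw [neg_pow]; simpa using hsum, hA, hB⟩
  · -- ρ ≤ -1/2, take β2 = s1/r
    have hρ2 : ρ ≤ -(1 / 2) := by
      rw [abs_of_neg hneg] at hρ; linarith
    have hcovle : cov ≤ -(s1 * s2 / 2) := by
      rw [hcov]; nlinarith [mul_pos hs1 hs2]
    have hvar : dvar (fun i => (s2 / r) * x i + (s1 / r) * y i) * r ^ 2 =
        2 * s1 ^ 2 * s2 ^ 2 + 2 * s1 * s2 * cov := by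
      rw [dvar_comb, hv1, hv2, ← hcovdef]
      field_simp
      ring
    have h3 : s1 * s2 * cov ≤ s1 * s2 * (-(s1 * s2 / 2)) :=
      mul_le_mul_of_nonneg_left hcovle (mul_pos hs1 hs2).le
    have hlt1 : dvar (fun i => (s2 / r) * x i + (s1 / r) * y i) < s1 ^ 2 := by
      rw [← mul_lt_mul_iff_left₀ (by positivity : (0:ℝ) < r ^ 2), hvar, hr2]
      nlinarith [h3, pow_pos hs1 4, pow_pos hs2 4]
    have hlt2 : dvar (fun i => (s2 / r) * x i + (s1 / r) * y i) < s2 ^ 2 := by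
      rw [← mul_lt_mul_iff_left₀ (by positivity : (0:ℝ) < r ^ 2), hvar, hr2]
      nlinarith [h3, pow_pos hs1 4, pow_pos hs2 4]
    obtain ⟨hA, hB⟩ := key (s1 / r) hlt1 hlt2
    exact ⟨s2 / r, s1 / r, hsum, hA, hB⟩
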